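/- Let H be a real Hilbert space with dim H ≥ 2 and let φ : H → ℝ be lower semicontinuous (or upper semicontinuous) and such that for every nonempty closed convex set C ⊆ H the infimum of φ on C is attained at P_C 0. Then there exists an increasing function θ : [0,∞) → ℝ with φ = θ ∘ ‖·‖. -/

import Mathlib

open RealInnerProductSpace

/-- `p` is the metric projection of `x` onto `C`. -/
def IsProj {E : Type*} [NormedAddCommGroup E] (C : Set E) (x p : E) : Prop :=
  p ∈ C ∧ ∀ y ∈ C, ‖x - p‖ ≤ ‖x - y‖

theorem arith_key (L α : ℝ) (hL : 0 < L) (hα0 : 0 ≤ α) :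
    ∃ n : ℕ, 1 ≤ n ∧ Real.exp (-(L / n)) ≤ Real.cos (α / n) := by
  refine ⟨max 1 (max ⌈α⌉₊ ⌈α ^ 2 / L⌉₊), le_max_left _ _, ?_⟩
  set n : ℕ := max 1 (max ⌈α⌉₊ ⌈α ^ 2 / L⌉₊) with hn_def
  have hn1 : 1 ≤ n := le_max_left _ _
  have hnR : (1 : ℝ) ≤ (n : ℝ) := by exact_mod_cast hn1
  have hnpos : (0 : ℝ) < (n : ℝ) := by linarith
  have hnα : α ≤ (n : ℝ) :=
    le_trans (Nat.le_ceil α) (by exact_mod_cast le_trans (le_max_left _ _) (le_max_right 1 _))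
  have hnα2 : α ^ 2 / L ≤ (n : ℝ) :=
    le_trans (Nat.le_ceil _) (by exact_mod_cast le_trans (le_max_right _ _) (le_max_right 1 _))
  have hα2L : α ^ 2 ≤ L * (n : ℝ) := by rw [div_le_iff₀ hL] at hnα2; linarith
  have ht : (0:ℝ) < L / n := by positivity
  have h1 : Real.exp (-(L / n)) ≤ 1 / (1 + L / n) := by
    rw [Real.exp_neg, one_div]
    exact inv_anti₀ (by linarith) (by linarith [Real.add_one_le_exp (L / n)])
  have h2 : 1 - (α / n) ^ 2 / 2 ≤ Real.cos (α / n) := Real.one_sub_sq_div_two_le_cos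
  have ha1 : α / n ≤ 1 := by rw [div_le_one hnpos]; exact hnα
  have ha0 : (0:ℝ) ≤ α / n := by positivity
  have ha2 : (α / n) ^ 2 ≤ L / n := by
    rw [div_pow, div_le_div_iff₀ (by positivity) hnpos]
    nlinarith
  have h3 : 1 / (1 + L / n) ≤ 1 - (α / n) ^ 2 / 2 := by
    rw [div_le_iff₀ (by linarith)]
    have hsq1 : (α / n) ^ 2 ≤ 1 := by nlinarith
    have hsq2 : (α / n) ^ 2 * (L / n) ≤ 1 * (L / n) := mul_le_mul_of_nonneg_right hsq1 ht.le
    nlinarith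
  linarith
theorem inner_combo {H : Type*} [NormedAddCommGroup H] [InnerProductSpace ℝ H]
    {u v : H} (hu : ‖u‖ = 1) (hv : ‖v‖ = 1) (huv : ⟪u, v⟫ = 0)
    (a b c d : ℝ) : ⟪a • u + b • v, c • u + d • v⟫ = a * c + b * d := by
  have huu : ⟪u, u⟫ = 1 := by rw [real_inner_self_eq_norm_sq, hu]; norm_num
  have hvv : ⟪v, v⟫ = 1 := by rw [real_inner_self_eq_norm_sq, hv]; norm_num
  have hvu : ⟪v, u⟫ = 0 := by rw [real_inner_comm]; exact huv
  simp [inner_add_left, inner_add_right, real_inner_smul_left, real_inner_smul_right,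
    huu, hvv, huv, hvu, hu, hv]
  ring
theorem chain_core {H : Type*} [NormedAddCommGroup H] [InnerProductSpace ℝ H]
    (φ : H → ℝ) (hstep : ∀ p y : H, ‖p‖ ^ 2 ≤ ⟪p, y⟫ → φ p ≤ φ y)
    {u v : H} (hu : ‖u‖ = 1) (hv : ‖v‖ = 1) (huv : ⟪u, v⟫ = 0)
    {r R c s : ℝ} (hr : 0 < r) (hR : r < R) (hs : 0 ≤ s) (hcs : c ^ 2 + s ^ 2 = R ^ 2) :
    φ (r • u) ≤ φ (c • u + s • v) := by
  have hRpos : 0 < R := lt_trans hr hR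
  have hcR1 : -1 ≤ c / R := by
    rw [le_div_iff₀ hRpos]; nlinarith [sq_nonneg s, sq_nonneg (c + R)]
  have hcR2 : c / R ≤ 1 := by
    rw [div_le_iff₀ hRpos]; nlinarith [sq_nonneg s, sq_nonneg (c - R)]
  have hα0 : 0 ≤ Real.arccos (c / R) := Real.arccos_nonneg _
  have hcosα : Real.cos (Real.arccos (c / R)) = c / R := Real.cos_arccos hcR1 hcR2
  have hsinα : Real.sin (Real.arccos (c / R)) = s / R := by
    rw [Real.sin_arccos]
    have h5 : 1 - (c / R) ^ 2 = (s / R) ^ 2 := by field_simp; nlinarith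
    rw [h5, Real.sqrt_sq (by positivity)]
  have hL : 0 < Real.log (R / r) := Real.log_pos ((one_lt_div hr).mpr hR)
  obtain ⟨n, hn1, key⟩ := arith_key (Real.log (R / r)) (Real.arccos (c / R)) hL hα0
  set L : ℝ := Real.log (R / r) with hLdef
  set α : ℝ := Real.arccos (c / R) with hαdef
  have hnne : (n : ℝ) ≠ 0 := by
    have : (1:ℝ) ≤ (n:ℝ) := by exact_mod_cast hn1
    linarith
  -- the chain points
  set z : ℝ → H := fun t =>
    (r * Real.exp (t * L / n) * Real.cos (t * α / n)) • u +
    (r * Real.exp (t * L / n) * Real.sin (t * α / n)) • v with hz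
  have hzdef : ∀ t : ℝ, z t =
      (r * Real.exp (t * L / n) * Real.cos (t * α / n)) • u +
      (r * Real.exp (t * L / n) * Real.sin (t * α / n)) • v := by
    intro t; rw [hz]
  clear_value z
  clear hz
  have hz0 : z 0 = r • u := by rw [hzdef]; norm_num
  have hzn : z n = c • u + s • v := by
    rw [hzdef]
    have e1 : (n:ℝ) * L / n = L := by field_simp
    have e2 : (n:ℝ) * α / n = α := by field_simp
    rw [e1, e2, hLdef, Real.exp_log (by positivity), hcosα, hsinα]
    congr 1 <;> congr 1 <;> field_simp
  have hnormz : ∀ t : ℝ, ‖z t‖ ^ 2 = (r * Real.exp (t * L / n)) ^ 2 := by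
    intro t
    rw [← real_inner_self_eq_norm_sq, hzdef, inner_combo hu hv huv]
    nlinarith [Real.sin_sq_add_cos_sq (t * α / n)]
  have hstep2 : ∀ t : ℝ, φ (z t) ≤ φ (z (t + 1)) := by
    intro t
    apply hstep
    rw [hnormz, hzdef, hzdef, inner_combo hu hv huv]
    have harg : (t+1) * α / n - t * α / n = α / n := by field_simp; ring
    have htrig : Real.cos ((t+1) * α / n) * Real.cos (t * α / n) +
        Real.sin ((t+1) * α / n) * Real.sin (t * α / n) = Real.cos (α / n) := by
      rw [← Real.cos_sub, harg]
    have hexp : Real.exp ((t+1) * L / n) = Real.exp (t * L / n) * Real.exp (L / n) := by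
      rw [← Real.exp_add]; congr 1; field_simp
    have h4 : 1 ≤ Real.exp (L / n) * Real.cos (α / n) := by
      have h5 := mul_le_mul_of_nonneg_left key (Real.exp_pos (L / n)).le
      rw [← Real.exp_add] at h5
      simp only [add_neg_cancel, Real.exp_zero] at h5
      exact h5
    have hepos := Real.exp_pos (t * L / n)
    have hepos2 := Real.exp_pos (L / n)
    rw [hexp]
    have hRHS : r * Real.exp (t * L / n) * Real.cos (t * α / n) *
        (r * (Real.exp (t * L / n) * Real.exp (L / n)) * Real.cos ((t + 1) * α / n)) +
        r * Real.exp (t * L / n) * Real.sin (t * α / n) *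
        (r * (Real.exp (t * L / n) * Real.exp (L / n)) * Real.sin ((t + 1) * α / n))
        = (r * Real.exp (t * L / n)) ^ 2 * (Real.exp (L / n) * Real.cos (α / n)) := by
      rw [← htrig]; ring
    rw [hRHS]
    calc (r * Real.exp (t * L / n)) ^ 2 = (r * Real.exp (t * L / n)) ^ 2 * 1 := by ring
      _ ≤ (r * Real.exp (t * L / n)) ^ 2 * (Real.exp (L / n) * Real.cos (α / n)) :=
        mul_le_mul_of_nonneg_left h4 (sq_nonneg _)
  have main : ∀ i : ℕ, φ (r • u) ≤ φ (z i) := by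
    intro i
    induction i with
    | zero => rw [Nat.cast_zero, hz0]
    | succ k ih =>
      have hcast : ((k + 1 : ℕ) : ℝ) = (k : ℝ) + 1 := by push_cast; ring
      rw [hcast]
      exact le_trans ih (hstep2 k)
  have := main n
  rwa [hzn] at this
theorem exists_orth {H : Type*} [NormedAddCommGroup H] [InnerProductSpace ℝ H]
    [CompleteSpace H] (hdim : 2 ≤ Module.rank ℝ H) (u : H) :
    ∃ v : H, ‖v‖ = 1 ∧ ⟪u, v⟫ = 0 := by
  have hK : (ℝ ∙ u)ᗮ ≠ ⊥ := by
    intro hbot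
    have htop : (ℝ ∙ u) = ⊤ := (Submodule.orthogonal_eq_bot_iff (K := ℝ ∙ u)).mp hbot
    have h1 : Module.rank ℝ (ℝ ∙ u) ≤ 1 := by
      simpa using rank_span_le (R := ℝ) ({u} : Set H)
    rw [htop, rank_top] at h1
    exact absurd (le_trans hdim h1) (by norm_num)
  obtain ⟨w, hw, hw0⟩ := Submodule.exists_mem_ne_zero_of_ne_bot hK
  refine ⟨‖w‖⁻¹ • w, ?_, ?_⟩
  · rw [norm_smul]; simp [norm_ne_zero_iff.mpr hw0]
  · rw [real_inner_smul_right]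
    have : ⟪u, w⟫ = 0 := by
      have := (Submodule.mem_orthogonal (ℝ ∙ u) w).mp hw u (Submodule.mem_span_singleton_self u)
      simpa [real_inner_comm] using this
    simp [this]

/-- there is an orthonormal frame adapted to x and y -/
theorem exists_frame {H : Type*} [NormedAddCommGroup H] [InnerProductSpace ℝ H]
    [CompleteSpace H] (hdim : 2 ≤ Module.rank ℝ H) (x y : H) (hx0 : x ≠ 0) :
    ∃ (u v : H) (c s : ℝ), ‖u‖ = 1 ∧ ‖v‖ = 1 ∧ ⟪u, v⟫ = 0 ∧ x = ‖x‖ • u ∧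
      0 ≤ s ∧ y = c • u + s • v ∧ c ^ 2 + s ^ 2 = ‖y‖ ^ 2 := by
  have hr : 0 < ‖x‖ := norm_pos_iff.mpr hx0
  obtain ⟨u, hu, hxu⟩ : ∃ u : H, ‖u‖ = 1 ∧ x = ‖x‖ • u := by
    refine ⟨‖x‖⁻¹ • x, ?_, ?_⟩
    · rw [norm_smul, norm_inv, norm_norm, inv_mul_cancel₀ (ne_of_gt hr)]
    · rw [smul_smul, mul_inv_cancel₀ (ne_of_gt hr), one_smul]
  suffices h : ∃ (v : H) (c s : ℝ), ‖v‖ = 1 ∧ ⟪u, v⟫ = 0 ∧ 0 ≤ s ∧ y = c • u + s • v by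
    obtain ⟨v, c, s, hv, huv, hs, hy⟩ := h
    refine ⟨u, v, c, s, hu, hv, huv, hxu, hs, hy, ?_⟩
    have h1 : ⟪y, y⟫ = c * c + s * s := by rw [hy]; exact inner_combo hu hv huv c s c s
    have h2 : ⟪y, y⟫ = ‖y‖ ^ 2 := real_inner_self_eq_norm_sq y
    nlinarith [h1, h2]
  by_cases hw0 : y - ⟪u, y⟫ • u = 0
  · obtain ⟨v, hv, huv⟩ := exists_orth hdim u
    refine ⟨v, ⟪u, y⟫, 0, hv, huv, le_refl 0, ?_⟩
    rw [zero_smul, add_zero]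
    rw [sub_eq_zero] at hw0
    exact hw0
  · set w : H := y - ⟪u, y⟫ • u with hw_def
    have huw : ⟪u, w⟫ = 0 := by
      rw [hw_def, inner_sub_right, real_inner_smul_right, real_inner_self_eq_norm_sq, hu]
      ring
    refine ⟨‖w‖⁻¹ • w, ⟪u, y⟫, ‖w‖, ?_, ?_, norm_nonneg w, ?_⟩
    · rw [norm_smul, norm_inv, norm_norm, inv_mul_cancel₀ (norm_ne_zero_iff.mpr hw0)]
    · rw [real_inner_smul_right, huw, mul_zero]
    · rw [smul_smul, mul_inv_cancel₀ (norm_ne_zero_iff.mpr hw0), one_smul, hw_def]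
      module

/-- strict norm inequality gives φ comparison -/
theorem strict_lemma {H : Type*} [NormedAddCommGroup H] [InnerProductSpace ℝ H]
    [CompleteSpace H] (hdim : 2 ≤ Module.rank ℝ H) (φ : H → ℝ)
    (hstep : ∀ p y : H, ‖p‖ ^ 2 ≤ ⟪p, y⟫ → φ p ≤ φ y)
    (x y : H) (hxy : ‖x‖ < ‖y‖) : φ x ≤ φ y := by
  by_cases hx0 : x = 0
  · apply hstep; simp [hx0]
  obtain ⟨u, v, c, s, hu, hv, huv, hxu, hs, hy, hcs⟩ := exists_frame hdim x y hx0
  rw [hxu, hy]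
  exact chain_core φ hstep hu hv huv (norm_pos_iff.mpr hx0) hxy hs hcs

theorem step_lemma {H : Type*} [NormedAddCommGroup H] [InnerProductSpace ℝ H]
    (φ : H → ℝ)
    (hφ : ∀ C : Set H, C.Nonempty → IsClosed C → Convex ℝ C →
      ∀ p, IsProj C 0 p → ∀ y ∈ C, φ p ≤ φ y)
    (p y : H) (h : ‖p‖ ^ 2 ≤ ⟪p, y⟫) : φ p ≤ φ y := by
  set C : Set H := {z | ‖p‖ ^ 2 ≤ ⟪p, z⟫} with hC
  have hpC : p ∈ C := by simp [hC, real_inner_self_eq_norm_sq]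
  have hclosed : IsClosed C := isClosed_le continuous_const (continuous_const.inner continuous_id)
  have hconv : Convex ℝ C := by
    intro a ha b hb s t hs ht hst
    simp only [hC, Set.mem_setOf_eq] at *
    rw [inner_add_right, real_inner_smul_right, real_inner_smul_right]
    nlinarith [mul_le_mul_of_nonneg_left ha hs, mul_le_mul_of_nonneg_left hb ht]
  have hproj : IsProj C 0 p := by
    refine ⟨hpC, fun z hz => ?_⟩
    simp only [zero_sub, norm_neg]
    have h1 : ⟪p, z⟫ ≤ ‖p‖ * ‖z‖ := real_inner_le_norm p z
    have h2 : ‖p‖ ^ 2 ≤ ⟪p, z⟫ := hz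
    rcases eq_or_lt_of_le (norm_nonneg p) with h0 | h0
    · linarith [norm_nonneg z, (by rw [← h0]; ring : ‖p‖ ^ 2 = 0)]
    · nlinarith
  exact hφ C ⟨p, hpC⟩ hclosed hconv p hproj y h

theorem semicontinuous_radial_representation
    {H : Type*} [NormedAddCommGroup H] [InnerProductSpace ℝ H] [CompleteSpace H]
    (hdim : 2 ≤ Module.rank ℝ H) (φ : H → ℝ)
    (hsc : LowerSemicontinuous φ ∨ UpperSemicontinuous φ)
    (hφ : ∀ C : Set H, C.Nonempty → IsClosed C → Convex ℝ C →
      ∀ p, IsProj C 0 p → ∀ y ∈ C, φ p ≤ φ y) :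
    ∃ θ : ℝ → ℝ, MonotoneOn θ (Set.Ici (0 : ℝ)) ∧ ∀ x : H, φ x = θ ‖x‖ := by
  have hstep : ∀ p y : H, ‖p‖ ^ 2 ≤ ⟪p, y⟫ → φ p ≤ φ y := step_lemma φ hφ
  -- nonstrict monotonicity in the norm
  have mono : ∀ x y : H, ‖x‖ ≤ ‖y‖ → φ x ≤ φ y := by
    intro x y hxy
    by_cases hx0 : x = 0
    · apply hstep; simp [hx0]
    have hxpos : 0 < ‖x‖ := norm_pos_iff.mpr hx0
    rcases hsc with hlsc | husc
    · by_contra hcon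
      push_neg at hcon
      have hev : ∀ᶠ z in nhds x, φ y < φ z := hlsc x (φ y) hcon
      have hcont : ContinuousAt (fun t : ℝ => t • x) 1 :=
        (continuous_id.smul continuous_const).continuousAt
      have htends : Filter.Tendsto (fun t : ℝ => t • x) (nhds 1) (nhds x) := by
        have := hcont.tendsto
        rwa [one_smul] at this
      have hev2 : ∀ᶠ t in nhds (1 : ℝ), φ y < φ (t • x) := htends.eventually hev
      have hpos : ∀ᶠ t in nhds (1 : ℝ), (0 : ℝ) < t := eventually_gt_nhds (by norm_num)
      have hall : ∀ᶠ t in nhdsWithin (1 : ℝ) (Set.Iio 1),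
          (φ y < φ (t • x) ∧ 0 < t) ∧ t ∈ Set.Iio 1 :=
        ((hev2.and hpos).filter_mono nhdsWithin_le_nhds).and self_mem_nhdsWithin
      obtain ⟨t, ⟨hty, htpos⟩, ht1⟩ := hall.exists
      have hn : ‖t • x‖ < ‖y‖ := by
        rw [norm_smul, Real.norm_eq_abs, abs_of_pos htpos]
        calc t * ‖x‖ < 1 * ‖x‖ := by
              exact mul_lt_mul_of_pos_right ht1 hxpos
          _ = ‖x‖ := one_mul _
          _ ≤ ‖y‖ := hxy
      exact absurd (strict_lemma hdim φ hstep (t • x) y hn) (not_le.mpr hty)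
    · by_contra hcon
      push_neg at hcon
      have hev : ∀ᶠ z in nhds y, φ z < φ x := husc y (φ x) hcon
      have hcont : ContinuousAt (fun t : ℝ => t • y) 1 :=
        (continuous_id.smul continuous_const).continuousAt
      have htends : Filter.Tendsto (fun t : ℝ => t • y) (nhds 1) (nhds y) := by
        have := hcont.tendsto
        rwa [one_smul] at this
      have hev2 : ∀ᶠ t in nhds (1 : ℝ), φ (t • y) < φ x := htends.eventually hev
      have hall : ∀ᶠ t in nhdsWithin (1 : ℝ) (Set.Ioi 1),
          φ (t • y) < φ x ∧ t ∈ Set.Ioi 1 :=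
        (hev2.filter_mono nhdsWithin_le_nhds).and self_mem_nhdsWithin
      obtain ⟨t, hty, ht1⟩ := hall.exists
      have hn : ‖x‖ < ‖t • y‖ := by
        rw [norm_smul, Real.norm_eq_abs, abs_of_pos (lt_trans one_pos ht1)]
        calc ‖x‖ ≤ ‖y‖ := hxy
          _ = 1 * ‖y‖ := (one_mul _).symm
          _ < t * ‖y‖ := by
              exact mul_lt_mul_of_pos_right ht1 (lt_of_lt_of_le hxpos hxy)
      exact absurd (strict_lemma hdim φ hstep x (t • y) hn) (not_le.mpr hty)
  -- build θ
  obtain ⟨e, he, -⟩ := exists_orth hdim (0 : H)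
  refine ⟨fun t => φ (t • e), ?_, ?_⟩
  · intro a ha b hb hab
    apply mono
    rw [norm_smul, norm_smul, he, mul_one, mul_one, Real.norm_eq_abs, Real.norm_eq_abs,
      abs_of_nonneg ha, abs_of_nonneg hb]
    exact hab
  · intro x
    have hnorm : ‖‖x‖ • e‖ = ‖x‖ := by
      rw [norm_smul, he, mul_one, norm_norm]
    exact le_antisymm (mono x (‖x‖ • e) hnorm.symm.le) (mono (‖x‖ • e) x hnorm.le)
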